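/- Let M be a special local Moufang set with abelian root group U_∞ and more than 3 equivalence classes. Then for every unit x, h_x = h_{-x} and μ_x = μ_{-x}; in particular every μ-map is an involution: μ_x^2 = 1. -/

import Mathlib

open Equiv

structure LocalMoufangSet (X : Type*) where
  r : X → X → Prop
  requiv : Equivalence r
  U : X → Subgroup (Equiv.Perm X)
  preserves : ∀ x : X, ∀ u ∈ U x, ∀ a b : X, r a b ↔ r (u a) (u b)
  big : ∃ a b c : X, ¬ r a b ∧ ¬ r b c ∧ ¬ r a c
  lm1 : ∀ x y : X, r x y → ∀ u ∈ U x, ∃ v ∈ U y, ∀ z : X, r (u z) (v z)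
  lm2_fix : ∀ x : X, ∀ u ∈ U x, u x = x
  lm2_trans : ∀ x y z : X, ¬ r y x → ¬ r z x → ∃! u : Equiv.Perm X, u ∈ U x ∧ u y = z
  lm2'_trans : ∀ x y z : X, ¬ r y x → ¬ r z x → ∃ u ∈ U x, r (u y) z
  lm2'_free : ∀ x : X, ∀ u ∈ U x, ∀ y : X, ¬ r y x → r (u y) y → ∀ z : X, r (u z) z
  lm3 : ∀ x : X, ∀ g ∈ (⨆ y : X, U y : Subgroup (Equiv.Perm X)),
      (U x).map (MulAut.conj g).toMonoidHom = U (g x)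

namespace LocalMoufangSet

variable {X : Type*} (M : LocalMoufangSet X)

/-- The little projective group. -/
def G : Subgroup (Equiv.Perm X) := ⨆ x : X, M.U x

/-- `x` is a unit with respect to the base points `o` (zero) and `ι` (infinity). -/
def IsUnitPt (o ι x : X) : Prop := ¬ M.r x o ∧ ¬ M.r x ι

/-- `μ` is the μ-map of `x`: it lies in the double coset `U_0 α_x U_0` and swaps `o` and `ι`.
(We use the left-action convention: a right product `g α h` corresponds to `h * α * g`.) -/
def IsMuMap (o ι x : X) (μ : Equiv.Perm X) : Prop :=
  μ o = ι ∧ μ ι = o ∧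
    ∃ a ∈ M.U ι, a o = x ∧ ∃ g ∈ M.U o, ∃ h ∈ M.U o, μ = h * a * g

/-- Specialness with respect to a μ-map `τ`: `(-x)τ = -(xτ)` for all units `x`. -/
def Special (o ι : X) (τ : Equiv.Perm X) : Prop :=
  ∀ z : X, IsUnitPt M o ι z → ∀ a ∈ M.U ι, a o = z → ∀ b ∈ M.U ι, b o = τ z →
    τ (a⁻¹ o) = b⁻¹ o

end LocalMoufangSet

theorem Equiv.Perm.apply_inv_self {α : Type*} (f : Equiv.Perm α) (x : α) : f (f⁻¹ x) = x :=
  f.apply_symm_apply x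

theorem Equiv.Perm.inv_apply_self {α : Type*} (f : Equiv.Perm α) (x : α) : f⁻¹ (f x) = x :=
  f.symm_apply_apply x

namespace LMS19

open scoped Classical

open LocalMoufangSet

variable {X : Type*}

theorem mem_G (M : LocalMoufangSet X) {x : X} {u : Equiv.Perm X} (hu : u ∈ M.U x) :
    u ∈ M.G :=
  Subgroup.mem_iSup_of_mem x hu

theorem presG (M : LocalMoufangSet X) {g : Equiv.Perm X} (hg : g ∈ M.G) (a b : X) :
    M.r a b ↔ M.r (g a) (g b) := by
  revert a b
  refine Subgroup.iSup_induction (C := fun g => ∀ a b : X, M.r a b ↔ M.r (g a) (g b)) M.U hg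
    (fun x u hu => M.preserves x u hu) (by simp) ?_
  intro p q hp hq a b
  simp only [Equiv.Perm.mul_apply]
  rw [hq a b]; exact hp (q a) (q b)

theorem conj_mem (M : LocalMoufangSet X) {g : Equiv.Perm X} (hg : g ∈ M.G) (x : X)
    {u : Equiv.Perm X} (hu : u ∈ M.U x) : g * u * g⁻¹ ∈ M.U (g x) := by
  rw [← M.lm3 x g hg]
  exact Subgroup.mem_map.mpr ⟨u, hu, by simp [MulAut.conj_apply]⟩

theorem Uuniq (M : LocalMoufangSet X) {x y z : X} (hy : ¬ M.r y x) (hz : ¬ M.r z x)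
    {u v : Equiv.Perm X} (hu : u ∈ M.U x) (hv : v ∈ M.U x)
    (huy : u y = z) (hvy : v y = z) : u = v := by
  obtain ⟨w, -, hwu⟩ := M.lm2_trans x y z hy hz
  rw [hwu u ⟨hu, huy⟩, hwu v ⟨hv, hvy⟩]

/-- The canonical element of `U ι` sending `o` to `z`. -/
noncomputable def aE (M : LocalMoufangSet X) (o ι z : X) : Equiv.Perm X :=
  if h : ¬ M.r o ι ∧ ¬ M.r z ι then (M.lm2_trans ι o z h.1 h.2).choose else 1

/-- The canonical element of `U o` sending `ι` to `y`. -/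
noncomputable def bE (M : LocalMoufangSet X) (o ι y : X) : Equiv.Perm X :=
  if h : ¬ M.r ι o ∧ ¬ M.r y o then (M.lm2_trans o ι y h.1 h.2).choose else 1

section basic

variable (M : LocalMoufangSet X) {o ι : X}

theorem aE_mem (h0 : ¬ M.r o ι) {z : X} (hz : ¬ M.r z ι) : aE M o ι z ∈ M.U ι := by
  rw [aE, dif_pos ⟨h0, hz⟩]
  exact (M.lm2_trans ι o z h0 hz).choose_spec.1.1

theorem aE_o (h0 : ¬ M.r o ι) {z : X} (hz : ¬ M.r z ι) : aE M o ι z o = z := by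
  rw [aE, dif_pos ⟨h0, hz⟩]
  exact (M.lm2_trans ι o z h0 hz).choose_spec.1.2

theorem aE_eq (h0 : ¬ M.r o ι) {z : X} (hz : ¬ M.r z ι) {u : Equiv.Perm X} (hu : u ∈ M.U ι)
    (huo : u o = z) : u = aE M o ι z :=
  Uuniq M h0 hz hu (aE_mem M h0 hz) huo (aE_o M h0 hz)

theorem aE_ι (h0 : ¬ M.r o ι) {z : X} (hz : ¬ M.r z ι) : aE M o ι z ι = ι :=
  M.lm2_fix ι _ (aE_mem M h0 hz)

theorem bE_mem (h0 : ¬ M.r o ι) {y : X} (hy : ¬ M.r y o) : bE M o ι y ∈ M.U o := by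
  have h0' : ¬ M.r ι o := fun h => h0 (M.requiv.symm h)
  rw [bE, dif_pos ⟨h0', hy⟩]
  exact (M.lm2_trans o ι y h0' hy).choose_spec.1.1

theorem bE_ι (h0 : ¬ M.r o ι) {y : X} (hy : ¬ M.r y o) : bE M o ι y ι = y := by
  have h0' : ¬ M.r ι o := fun h => h0 (M.requiv.symm h)
  rw [bE, dif_pos ⟨h0', hy⟩]
  exact (M.lm2_trans o ι y h0' hy).choose_spec.1.2

theorem bE_eq (h0 : ¬ M.r o ι) {y : X} (hy : ¬ M.r y o) {u : Equiv.Perm X} (hu : u ∈ M.U o)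
    (huι : u ι = y) : u = bE M o ι y :=
  Uuniq M (fun h => h0 (M.requiv.symm h)) hy hu (bE_mem M h0 hy) huι (bE_ι M h0 hy)

theorem bE_o (h0 : ¬ M.r o ι) {y : X} (hy : ¬ M.r y o) : bE M o ι y o = o :=
  M.lm2_fix o _ (bE_mem M h0 hy)

end basic

section neg

variable (M : LocalMoufangSet X) {o ι : X}

/-- `-z`. -/
noncomputable def negP (M : LocalMoufangSet X) (o ι z : X) : X := (aE M o ι z)⁻¹ o

theorem neg_nι (h0 : ¬ M.r o ι) {z : X} (hz : ¬ M.r z ι) : ¬ M.r (negP M o ι z) ι := by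
  intro h
  have h2 := (presG M (mem_G M (aE_mem M h0 hz)) _ _).mp h
  rw [negP, Equiv.Perm.apply_inv_self, aE_ι M h0 hz] at h2
  exact h0 h2

theorem neg_no (h0 : ¬ M.r o ι) {z : X} (hzo : ¬ M.r z o) (hz : ¬ M.r z ι) :
    ¬ M.r (negP M o ι z) o := by
  intro h
  have h2 := (presG M (mem_G M (aE_mem M h0 hz)) _ _).mp h
  rw [negP, Equiv.Perm.apply_inv_self, aE_o M h0 hz] at h2
  exact hzo (M.requiv.symm h2)

theorem aE_neg (h0 : ¬ M.r o ι) {z : X} (hz : ¬ M.r z ι) :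
    aE M o ι (negP M o ι z) = (aE M o ι z)⁻¹ :=
  (aE_eq M h0 (neg_nι M h0 hz) (inv_mem (aE_mem M h0 hz)) rfl).symm

theorem negneg (h0 : ¬ M.r o ι) {z : X} (hz : ¬ M.r z ι) :
    negP M o ι (negP M o ι z) = z := by
  rw [negP, aE_neg M h0 hz, inv_inv, aE_o M h0 hz]

theorem swapunit {g : Equiv.Perm X} (hg : g ∈ M.G) (hgo : g o = ι) (hgι : g ι = o)
    {z : X} (hz1 : ¬ M.r z o) (hz2 : ¬ M.r z ι) :
    ¬ M.r (g z) o ∧ ¬ M.r (g z) ι := by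
  constructor
  · intro h; rw [← hgι] at h; exact hz2 ((presG M hg z ι).mpr h)
  · intro h; rw [← hgo] at h; exact hz1 ((presG M hg z o).mpr h)

/-- abelian negation-swap: `a_c (-w) = -(a_c⁻¹ w)`. -/
theorem negswap (h0 : ¬ M.r o ι) (hab : ∀ u ∈ M.U ι, ∀ v ∈ M.U ι, u * v = v * u)
    {c w : X} (hc : ¬ M.r c ι) (hw : ¬ M.r w ι) :
    aE M o ι c (negP M o ι w) = negP M o ι ((aE M o ι c)⁻¹ w) := by
  have hp : ¬ M.r ((aE M o ι c)⁻¹ w) ι := by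
    intro h
    have h2 := (presG M (mem_G M (aE_mem M h0 hc)) _ _).mp h
    rw [Equiv.Perm.apply_inv_self, aE_ι M h0 hc] at h2
    exact hw h2
  have h1 : aE M o ι ((aE M o ι c)⁻¹ w) = (aE M o ι c)⁻¹ * aE M o ι w := by
    refine (aE_eq M h0 hp (mul_mem (inv_mem (aE_mem M h0 hc)) (aE_mem M h0 hw)) ?_).symm
    simp [Equiv.Perm.mul_apply, aE_o M h0 hw]
  have hcomm : aE M o ι c * (aE M o ι w)⁻¹ = (aE M o ι w)⁻¹ * aE M o ι c := by
    have h2 : Commute (aE M o ι c) (aE M o ι w) :=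
      hab _ (aE_mem M h0 hc) _ (aE_mem M h0 hw)
    exact h2.inv_right.eq
  calc aE M o ι c (negP M o ι w) = (aE M o ι c * (aE M o ι w)⁻¹) o := by
        simp [negP, Equiv.Perm.mul_apply]
    _ = ((aE M o ι w)⁻¹ * aE M o ι c) o := by rw [hcomm]
    _ = negP M o ι ((aE M o ι c)⁻¹ w) := by
        rw [negP, h1, mul_inv_rev, inv_inv]

end neg

section tau

variable (M : LocalMoufangSet X) {o ι : X} {τ : Equiv.Perm X}

theorem btrans (h0 : ¬ M.r o ι) (hτG : τ ∈ M.G) (hτo : τ o = ι) (hτι : τ ι = o)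
    {y : X} (hy : ¬ M.r y o) :
    bE M o ι y = τ * aE M o ι (τ⁻¹ y) * τ⁻¹ := by
  have hτinvι : τ⁻¹ ι = o := by rw [← hτo, Equiv.Perm.inv_apply_self]
  have hτinvo : τ⁻¹ o = ι := by rw [← hτι, Equiv.Perm.inv_apply_self]
  have hfy : ¬ M.r (τ⁻¹ y) ι := by
    intro h
    rw [← hτinvo] at h
    exact hy ((presG M (inv_mem hτG) y o).mpr h)
  refine (bE_eq M h0 hy ?_ ?_).symm
  · have := conj_mem M hτG ι (aE_mem M h0 hfy)
    rwa [hτι] at this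
  · simp only [Equiv.Perm.mul_apply]
    rw [hτinvι, aE_o M h0 hfy, Equiv.Perm.apply_inv_self]

end tau

section tau2

variable (M : LocalMoufangSet X) {o ι : X} {τ : Equiv.Perm X}

theorem τinv_ι (hτo : τ o = ι) : τ⁻¹ ι = o := by rw [← hτo, Equiv.Perm.inv_apply_self]

theorem τinv_o (hτι : τ ι = o) : τ⁻¹ o = ι := by rw [← hτι, Equiv.Perm.inv_apply_self]

theorem spInv (hτG : τ ∈ M.G) (hτo : τ o = ι) (hτι : τ ι = o)
    (hspτ : ∀ z : X, ¬ M.r z o → ¬ M.r z ι → τ (negP M o ι z) = negP M o ι (τ z))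
    {w : X} (hw1 : ¬ M.r w o) (hw2 : ¬ M.r w ι) :
    τ⁻¹ (negP M o ι w) = negP M o ι (τ⁻¹ w) := by
  have hz := swapunit M (inv_mem hτG) (τinv_o hτι) (τinv_ι hτo) hw1 hw2
  have h := hspτ (τ⁻¹ w) hz.1 hz.2
  rw [Equiv.Perm.apply_inv_self] at h
  rw [← h, Equiv.Perm.inv_apply_self]

/-- the key value `b_{-u} u = ι` (uses specialness). -/
theorem bval (h0 : ¬ M.r o ι) (hτG : τ ∈ M.G) (hτo : τ o = ι) (hτι : τ ι = o)
    (hspτ : ∀ z : X, ¬ M.r z o → ¬ M.r z ι → τ (negP M o ι z) = negP M o ι (τ z))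
    {u : X} (hu1 : ¬ M.r u o) (hu2 : ¬ M.r u ι) :
    bE M o ι (negP M o ι u) u = ι := by
  have hfu2 : ¬ M.r (τ⁻¹ u) ι := by
    intro h
    rw [← τinv_o hτι] at h
    exact hu1 ((presG M (inv_mem hτG) u o).mpr h)
  rw [btrans M h0 hτG hτo hτι (neg_no M h0 hu1 hu2)]
  simp only [Equiv.Perm.mul_apply]
  rw [spInv M hτG hτo hτι hspτ hu1 hu2, aE_neg M h0 hfu2]
  have h5 : (aE M o ι (τ⁻¹ u))⁻¹ ((aE M o ι (τ⁻¹ u)) o) = o := Equiv.Perm.inv_apply_self _ _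
  rw [aE_o M h0 hfu2] at h5
  rw [h5]
  exact hτo

theorem bE_neginv (h0 : ¬ M.r o ι) (hτG : τ ∈ M.G) (hτo : τ o = ι) (hτι : τ ι = o)
    (hspτ : ∀ z : X, ¬ M.r z o → ¬ M.r z ι → τ (negP M o ι z) = negP M o ι (τ z))
    {u : X} (hu1 : ¬ M.r u o) (hu2 : ¬ M.r u ι) :
    (bE M o ι (negP M o ι u))⁻¹ = bE M o ι u := by
  refine bE_eq M h0 hu1 (inv_mem (bE_mem M h0 (neg_no M h0 hu1 hu2))) ?_
  have h5 : (bE M o ι (negP M o ι u))⁻¹ ((bE M o ι (negP M o ι u)) u) = u :=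
    Equiv.Perm.inv_apply_self _ _
  rwa [bval M h0 hτG hτo hτι hspτ hu1 hu2] at h5

theorem bE_inv' (h0 : ¬ M.r o ι) (hτG : τ ∈ M.G) (hτo : τ o = ι) (hτι : τ ι = o)
    (hspτ : ∀ z : X, ¬ M.r z o → ¬ M.r z ι → τ (negP M o ι z) = negP M o ι (τ z))
    {u : X} (hu1 : ¬ M.r u o) (hu2 : ¬ M.r u ι) :
    (bE M o ι u)⁻¹ = bE M o ι (negP M o ι u) := by
  rw [← bE_neginv M h0 hτG hτo hτι hspτ hu1 hu2, inv_inv]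

end tau2

section conj

variable (M : LocalMoufangSet X) {o ι : X}

theorem conjA (h0 : ¬ M.r o ι) {m : Equiv.Perm X} (hm : m ∈ M.G) (hmo : m o = ι)
    (hmι : m ι = o) {z : X} (hz : ¬ M.r z ι) :
    m * aE M o ι z * m⁻¹ = bE M o ι (m z) := by
  have hmz : ¬ M.r (m z) o := by
    intro h
    rw [← hmι] at h
    exact hz ((presG M hm z ι).mpr h)
  refine bE_eq M h0 hmz ?_ ?_
  · have := conj_mem M hm ι (aE_mem M h0 hz)
    rwa [hmι] at this
  · simp only [Equiv.Perm.mul_apply]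
    rw [show m⁻¹ ι = o by rw [← hmo, Equiv.Perm.inv_apply_self], aE_o M h0 hz]

/-- every element of `G` swapping `o` and `ι` is special on units. -/
theorem msp (h0 : ¬ M.r o ι) {τ : Equiv.Perm X} (hτG : τ ∈ M.G) (hτo : τ o = ι)
    (hτι : τ ι = o)
    (hspτ : ∀ z : X, ¬ M.r z o → ¬ M.r z ι → τ (negP M o ι z) = negP M o ι (τ z))
    {m : Equiv.Perm X} (hm : m ∈ M.G) (hmo : m o = ι) (hmι : m ι = o)
    {z : X} (hz1 : ¬ M.r z o) (hz2 : ¬ M.r z ι) :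
    m (negP M o ι z) = negP M o ι (m z) := by
  have hmz := swapunit M hm hmo hmι hz1 hz2
  have h1 := conjA M h0 hm hmo hmι hz2
  have h2 := conjA M h0 hm hmo hmι (neg_nι M h0 hz2)
  rw [aE_neg M h0 hz2] at h2
  have h3 : m * (aE M o ι z)⁻¹ * m⁻¹ = (m * aE M o ι z * m⁻¹)⁻¹ := by group
  rw [h3, h1, bE_inv' M h0 hτG hτo hτι hspτ hmz.1 hmz.2] at h2
  have hval := congrArg (fun (σ : Equiv.Perm X) => σ ι) h2
  rw [bE_ι M h0 (neg_no M h0 hmz.1 hmz.2),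
    bE_ι M h0 (swapunit M hm hmo hmι (neg_no M h0 hz1 hz2) (neg_nι M h0 hz2)).1] at hval
  exact hval.symm

end conj

section chain

variable (M : LocalMoufangSet X) {o ι : X} {τ : Equiv.Perm X}

theorem subS (h0 : ¬ M.r o ι) (hτG : τ ∈ M.G) (hτo : τ o = ι) (hτι : τ ι = o)
    (hspτ : ∀ z : X, ¬ M.r z o → ¬ M.r z ι → τ (negP M o ι z) = negP M o ι (τ z))
    (hab : ∀ u ∈ M.U ι, ∀ v ∈ M.U ι, u * v = v * u)
    {u s : X} (hu1 : ¬ M.r u o) (hu2 : ¬ M.r u ι)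
    (hs1 : ¬ M.r s o) (hs2 : ¬ M.r s ι) (hsu : ¬ M.r s u) :
    bE M o ι u (negP M o ι s) = negP M o ι (bE M o ι (negP M o ι u) s) := by
  have hfu := swapunit M (inv_mem hτG) (τinv_o hτι) (τinv_ι hτo) hu1 hu2
  have hft := swapunit M (inv_mem hτG) (τinv_o hτι) (τinv_ι hτo) hs1 hs2
  set fu := τ⁻¹ u with hfudef
  set ft := τ⁻¹ s with hftdef
  have hr1ι : ¬ M.r ((aE M o ι fu)⁻¹ ft) ι := by
    intro h
    have h2 := (presG M (mem_G M (aE_mem M h0 hfu.2)) _ _).mp h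
    rw [Equiv.Perm.apply_inv_self, aE_ι M h0 hfu.2] at h2
    exact hft.2 h2
  have hr1o : ¬ M.r ((aE M o ι fu)⁻¹ ft) o := by
    intro h
    have h2 := (presG M (mem_G M (aE_mem M h0 hfu.2)) _ _).mp h
    rw [Equiv.Perm.apply_inv_self, aE_o M h0 hfu.2] at h2
    exact hsu ((presG M (inv_mem hτG) s u).mpr h2)
  rw [btrans M h0 hτG hτo hτι hu1, btrans M h0 hτG hτo hτι (neg_no M h0 hu1 hu2)]
  simp only [Equiv.Perm.mul_apply]
  rw [spInv M hτG hτo hτι hspτ hs1 hs2, spInv M hτG hτo hτι hspτ hu1 hu2]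
  rw [← hfudef, ← hftdef]
  rw [negswap M h0 hab hfu.2 hft.2]
  rw [aE_neg M h0 hfu.2]
  exact hspτ _ hr1o hr1ι

theorem chain (h0 : ¬ M.r o ι) (hτG : τ ∈ M.G) (hτo : τ o = ι) (hτι : τ ι = o)
    (hspτ : ∀ z : X, ¬ M.r z o → ¬ M.r z ι → τ (negP M o ι z) = negP M o ι (τ z))
    (hab : ∀ u ∈ M.U ι, ∀ v ∈ M.U ι, u * v = v * u)
    {u t : X} (hu1 : ¬ M.r u o) (hu2 : ¬ M.r u ι)
    (ht1 : ¬ M.r t o) (ht2 : ¬ M.r t ι) (htu : ¬ M.r t u) :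
    (bE M o ι u * aE M o ι (negP M o ι u) * bE M o ι u) (negP M o ι t)
      = negP M o ι ((bE M o ι (negP M o ι u) * aE M o ι u * bE M o ι (negP M o ι u)) t) := by
  have hnu1 : ¬ M.r (negP M o ι u) o := neg_no M h0 hu1 hu2
  have hw_ι : ¬ M.r (bE M o ι (negP M o ι u) t) ι := by
    intro h
    have h2 := (presG M (inv_mem (mem_G M (bE_mem M h0 hnu1))) _ _).mp h
    rw [Equiv.Perm.inv_apply_self, bE_neginv M h0 hτG hτo hτι hspτ hu1 hu2,
      bE_ι M h0 hu1] at h2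
    exact htu h2
  have hAG := mem_G M (aE_mem M h0 hu2)
  have hBG := mem_G M (bE_mem M h0 hnu1)
  have hAinvι : (aE M o ι u)⁻¹ ι = ι := by
    have := Equiv.Perm.inv_apply_self (aE M o ι u) ι
    rwa [aE_ι M h0 hu2] at this
  have hAinvu : (aE M o ι u)⁻¹ u = o := by
    have := Equiv.Perm.inv_apply_self (aE M o ι u) o
    rwa [aE_o M h0 hu2] at this
  have hBinvnu : (bE M o ι (negP M o ι u))⁻¹ (negP M o ι u) = ι := by
    have := Equiv.Perm.inv_apply_self (bE M o ι (negP M o ι u)) ι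
    rwa [bE_ι M h0 hnu1] at this
  have hBinvo : (bE M o ι (negP M o ι u))⁻¹ o = o := by
    have := Equiv.Perm.inv_apply_self (bE M o ι (negP M o ι u)) o
    rwa [bE_o M h0 hnu1] at this
  have hp2ι : ¬ M.r (aE M o ι u (bE M o ι (negP M o ι u) t)) ι := by
    intro h
    have h2 := (presG M (inv_mem hAG) _ _).mp h
    rw [Equiv.Perm.inv_apply_self, hAinvι] at h2
    exact hw_ι h2
  have hp2o : ¬ M.r (aE M o ι u (bE M o ι (negP M o ι u) t)) o := by
    intro h
    have h2 := (presG M (inv_mem hAG) _ _).mp h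
    rw [Equiv.Perm.inv_apply_self,
      show (aE M o ι u)⁻¹ o = negP M o ι u from rfl] at h2
    have h3 := (presG M (inv_mem hBG) _ _).mp h2
    rw [Equiv.Perm.inv_apply_self, hBinvnu] at h3
    exact ht2 h3
  have hp2u : ¬ M.r (aE M o ι u (bE M o ι (negP M o ι u) t)) u := by
    intro h
    have h2 := (presG M (inv_mem hAG) _ _).mp h
    rw [Equiv.Perm.inv_apply_self, hAinvu] at h2
    have h3 := (presG M (inv_mem hBG) _ _).mp h2
    rw [Equiv.Perm.inv_apply_self, hBinvo] at h3
    exact ht1 h3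
  simp only [Equiv.Perm.mul_apply]
  rw [subS M h0 hτG hτo hτι hspτ hab hu1 hu2 ht1 ht2 htu]
  rw [negswap M h0 hab (neg_nι M h0 hu2) hw_ι]
  rw [aE_neg M h0 hu2, inv_inv]
  rw [subS M h0 hτG hτo hτι hspτ hab hu1 hu2 hp2o hp2ι hp2u]

end chain

section muform

variable (M : LocalMoufangSet X) {o ι : X} {τ : Equiv.Perm X}

theorem muForm (h0 : ¬ M.r o ι) (hτG : τ ∈ M.G) (hτo : τ o = ι) (hτι : τ ι = o)
    (hspτ : ∀ z : X, ¬ M.r z o → ¬ M.r z ι → τ (negP M o ι z) = negP M o ι (τ z))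
    {x : X} (hx1 : ¬ M.r x o) (hx2 : ¬ M.r x ι)
    {μ : Equiv.Perm X} (hμ : M.IsMuMap o ι x μ) :
    μ = bE M o ι (negP M o ι x) * aE M o ι x * bE M o ι (negP M o ι x) := by
  obtain ⟨hμo, hμι, a, haU, hao, g, hgU, h, hhU, hμeq⟩ := hμ
  have ha : a = aE M o ι x := aE_eq M h0 hx2 haU hao
  have hgo' : g o = o := M.lm2_fix o g hgU
  have hho : h o = o := M.lm2_fix o h hhU
  rw [hμeq] at hμo hμι
  simp only [Equiv.Perm.mul_apply] at hμo hμι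
  have h2 : a (g ι) = o := (Equiv.injective h) (by rw [hμι, hho])
  have h3 : g ι = negP M o ι x := by
    have h3' : g ι = a⁻¹ o := by rw [← h2, Equiv.Perm.inv_apply_self]
    rw [ha] at h3'
    exact h3'
  have hg : g = bE M o ι (negP M o ι x) := bE_eq M h0 (neg_no M h0 hx1 hx2) hgU h3
  have h4 : h x = ι := by rw [← hao, ← hgo']; exact hμo
  have hh : h = bE M o ι (negP M o ι x) :=
    Uuniq M hx1 (fun hq => h0 (M.requiv.symm hq)) hhU
      (bE_mem M h0 (neg_no M h0 hx1 hx2)) h4 (bval M h0 hτG hτo hτι hspτ hx1 hx2)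
  rw [hμeq, ha, hg, hh]

theorem pick_z (M : LocalMoufangSet X) (o ι x : X)
    (big4 : ∃ a b c d : X, ¬ M.r a b ∧ ¬ M.r a c ∧ ¬ M.r a d ∧
      ¬ M.r b c ∧ ¬ M.r b d ∧ ¬ M.r c d) :
    ∃ z : X, ¬ M.r z o ∧ ¬ M.r z ι ∧ ¬ M.r z x := by
  obtain ⟨a, b, c, d, hab, hac, had, hbc, hbd, hcd⟩ := big4
  by_contra hcon
  push_neg at hcon
  have key : ∀ z : X, M.r z o ∨ M.r z ι ∨ M.r z x := by
    intro z
    by_cases h1 : M.r z o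
    · exact Or.inl h1
    by_cases h2 : M.r z ι
    · exact Or.inr (Or.inl h2)
    exact Or.inr (Or.inr (hcon z h1 h2))
  rcases key a with ha | ha | ha <;> rcases key b with hb | hb | hb <;>
    rcases key c with hc | hc | hc <;> rcases key d with hd | hd | hd <;>
    first
      | exact hab (M.requiv.trans ha (M.requiv.symm hb))
      | exact hac (M.requiv.trans ha (M.requiv.symm hc))
      | exact had (M.requiv.trans ha (M.requiv.symm hd))
      | exact hbc (M.requiv.trans hb (M.requiv.symm hc))
      | exact hbd (M.requiv.trans hb (M.requiv.symm hd))
      | exact hcd (M.requiv.trans hc (M.requiv.symm hd))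

end muform

end LMS19

open LMS19

/-- in a special local Moufang set with abelian `U_∞` and more
than 3 equivalence classes, `h_x = h_{-x}` and `μ_x = μ_{-x}` for every unit
`x`; hence every μ-map is an involution.  (Left convention: `h_x = μ_x * τ`.) -/
theorem stmt19 {X : Type*} (M : LocalMoufangSet X) (o ι : X) (h0 : ¬ M.r o ι)
    (e : X) (he : M.IsUnitPt o ι e)
    (τ : Equiv.Perm X) (hτ : M.IsMuMap o ι e τ)
    (hsp : M.Special o ι τ)
    (hab : ∀ u ∈ M.U ι, ∀ v ∈ M.U ι, u * v = v * u)
    (big4 : ∃ a b c d : X, ¬ M.r a b ∧ ¬ M.r a c ∧ ¬ M.r a d ∧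
      ¬ M.r b c ∧ ¬ M.r b d ∧ ¬ M.r c d) :
    ∀ x : X, M.IsUnitPt o ι x → ∀ α ∈ M.U ι, α o = x →
      ∀ μx μnx : Equiv.Perm X,
        M.IsMuMap o ι x μx → M.IsMuMap o ι (α⁻¹ o) μnx →
        μx * τ = μnx * τ ∧ μx = μnx ∧ μx * μx = 1 := by
  intro x hx α hαU hαo μx μnx hμx hμnx
  obtain ⟨hx1, hx2⟩ := hx
  -- τ facts
  have hτo : τ o = ι := hτ.1
  have hτι : τ ι = o := hτ.2.1
  have hτG : τ ∈ M.G := by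
    obtain ⟨-, -, a, haU, -, g, hgU, h, hhU, hτeq⟩ := hτ
    rw [hτeq]
    exact mul_mem (mul_mem (mem_G M hhU) (mem_G M haU)) (mem_G M hgU)
  have hspτ : ∀ z : X, ¬ M.r z o → ¬ M.r z ι →
      τ (negP M o ι z) = negP M o ι (τ z) := by
    intro z hz1 hz2
    have hτz := swapunit M hτG hτo hτι hz1 hz2
    exact hsp z ⟨hz1, hz2⟩ (aE M o ι z) (aE_mem M h0 hz2) (aE_o M h0 hz2)
      (aE M o ι (τ z)) (aE_mem M h0 hτz.2) (aE_o M h0 hτz.2)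
  -- basic units
  have hnx1 : ¬ M.r (negP M o ι x) o := neg_no M h0 hx1 hx2
  have hnx2 : ¬ M.r (negP M o ι x) ι := neg_nι M h0 hx2
  have hα : α = aE M o ι x := aE_eq M h0 hx2 hαU hαo
  have hαinv : α⁻¹ o = negP M o ι x := by rw [hα]; rfl
  rw [hαinv] at hμnx
  -- canonical forms
  have hm : μx = bE M o ι (negP M o ι x) * aE M o ι x * bE M o ι (negP M o ι x) :=
    muForm M h0 hτG hτo hτι hspτ hx1 hx2 hμx
  have hmn0 : μnx = bE M o ι (negP M o ι (negP M o ι x)) * aE M o ι (negP M o ι x)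
      * bE M o ι (negP M o ι (negP M o ι x)) :=
    muForm M h0 hτG hτo hτι hspτ hnx1 hnx2 hμnx
  rw [negneg M h0 hx2] at hmn0
  set m := bE M o ι (negP M o ι x) * aE M o ι x * bE M o ι (negP M o ι x) with hmdef
  set mn := bE M o ι x * aE M o ι (negP M o ι x) * bE M o ι x with hmndef
  -- membership
  have hmG : m ∈ M.G := mul_mem (mul_mem (mem_G M (bE_mem M h0 hnx1))
    (mem_G M (aE_mem M h0 hx2))) (mem_G M (bE_mem M h0 hnx1))
  have hmnG : mn ∈ M.G := mul_mem (mul_mem (mem_G M (bE_mem M h0 hx1))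
    (mem_G M (aE_mem M h0 hnx2))) (mem_G M (bE_mem M h0 hx1))
  -- values
  have hmo : m o = ι := by
    rw [hmdef]
    simp only [Equiv.Perm.mul_apply]
    rw [bE_o M h0 hnx1, aE_o M h0 hx2, bval M h0 hτG hτo hτι hspτ hx1 hx2]
  have hmι : m ι = o := by
    rw [hmdef]
    simp only [Equiv.Perm.mul_apply]
    rw [bE_ι M h0 hnx1, show aE M o ι x (negP M o ι x) = o from by
      rw [negP, Equiv.Perm.apply_inv_self], bE_o M h0 hnx1]
  have hbxnx : bE M o ι x (negP M o ι x) = ι := by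
    have := bval M h0 hτG hτo hτι hspτ hnx1 hnx2
    rwa [negneg M h0 hx2] at this
  have hmno : mn o = ι := by
    rw [hmndef]
    simp only [Equiv.Perm.mul_apply]
    rw [bE_o M h0 hx1, aE_o M h0 hnx2, hbxnx]
  have hmnι : mn ι = o := by
    rw [hmndef]
    simp only [Equiv.Perm.mul_apply]
    rw [bE_ι M h0 hx1, aE_neg M h0 hx2, show (aE M o ι x)⁻¹ x = o from by
      nth_rewrite 2 [← aE_o M h0 hx2]
      exact Equiv.Perm.inv_apply_self _ _, bE_o M h0 hx1]
  -- case A : t not related to x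
  have hAfix : ∀ t : X, ¬ M.r t o → ¬ M.r t ι → ¬ M.r t x → m t = mn t := by
    intro t ht1 ht2 htx
    have hchain := chain M h0 hτG hτo hτι hspτ hab hx1 hx2 ht1 ht2 htx
    rw [← hmdef, ← hmndef] at hchain
    have hmsp := msp M h0 hτG hτo hτι hspτ hmnG hmno hmnι
      (neg_no M h0 ht1 ht2) (neg_nι M h0 ht2)
    rw [negneg M h0 ht2, hchain] at hmsp
    have hmt := swapunit M hmG hmo hmι ht1 ht2
    rw [hmsp, negneg M h0 hmt.2]
  -- case A' : t not related to -x
  have hA'fix : ∀ t : X, ¬ M.r t o → ¬ M.r t ι → ¬ M.r t (negP M o ι x) → m t = mn t := by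
    intro t ht1 ht2 htnx
    have hchain := chain M h0 hτG hτo hτι hspτ hab hnx1 hnx2 ht1 ht2 htnx
    rw [negneg M h0 hx2, ← hmdef, ← hmndef] at hchain
    have hmsp := msp M h0 hτG hτo hτι hspτ hmG hmo hmι
      (neg_no M h0 ht1 ht2) (neg_nι M h0 ht2)
    rw [negneg M h0 ht2, hchain] at hmsp
    have hmnt := swapunit M hmnG hmno hmnι ht1 ht2
    rw [hmsp, negneg M h0 hmnt.2]
  -- the difference permutation
  set gσ := mn⁻¹ * m with hgdef
  have hgfix_iff : ∀ p : X, m p = mn p → gσ p = p := by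
    intro p hp
    rw [hgdef]
    simp only [Equiv.Perm.mul_apply]
    rw [hp, Equiv.Perm.inv_apply_self]
  have hgfix_iff' : ∀ p : X, gσ p = p → m p = mn p := by
    intro p hp
    rw [hgdef] at hp
    simp only [Equiv.Perm.mul_apply] at hp
    have := congrArg mn hp
    rwa [Equiv.Perm.apply_inv_self] at this
  have hgG : gσ ∈ M.G := mul_mem (inv_mem hmnG) hmG
  have hgo : gσ o = o := by
    rw [hgdef]
    simp only [Equiv.Perm.mul_apply]
    rw [hmo, ← hmno, Equiv.Perm.inv_apply_self]
  have hgι : gσ ι = ι := by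
    rw [hgdef]
    simp only [Equiv.Perm.mul_apply]
    rw [hmι, ← hmnι, Equiv.Perm.inv_apply_self]
  have hginvo : gσ⁻¹ o = o := by
    have := Equiv.Perm.inv_apply_self gσ o
    rwa [hgo] at this
  have hginvι : gσ⁻¹ ι = ι := by
    have := Equiv.Perm.inv_apply_self gσ ι
    rwa [hgι] at this
  -- commuting with canonical elements with fixed index
  have hgconjA : ∀ z : X, ¬ M.r z o → ¬ M.r z ι → gσ z = z →
      gσ * aE M o ι z = aE M o ι z * gσ := by
    intro z hz1 hz2 hgz
    have hmem : gσ * aE M o ι z * gσ⁻¹ ∈ M.U ι := by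
      have := conj_mem M hgG ι (aE_mem M h0 hz2)
      rwa [hgι] at this
    have hval : (gσ * aE M o ι z * gσ⁻¹) o = z := by
      simp only [Equiv.Perm.mul_apply]
      rw [hginvo, aE_o M h0 hz2, hgz]
    have hconj : gσ * aE M o ι z * gσ⁻¹ = aE M o ι z := aE_eq M h0 hz2 hmem hval
    calc gσ * aE M o ι z = (gσ * aE M o ι z * gσ⁻¹) * gσ := by group
      _ = aE M o ι z * gσ := by rw [hconj]
  -- all units are fixed by gσ
  have hunits : ∀ t : X, ¬ M.r t o → ¬ M.r t ι → gσ t = t := by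
    intro t ht1 ht2
    by_cases htx : M.r t x
    · by_cases htnx : M.r t (negP M o ι x)
      · -- both related: then x ~ -x
        have hxnx : M.r x (negP M o ι x) := M.requiv.trans (M.requiv.symm htx) htnx
        obtain ⟨z, hz1, hz2, hzx⟩ := pick_z M o ι x big4
        have hznx : ¬ M.r z (negP M o ι x) := fun hq =>
          hzx (M.requiv.trans hq (M.requiv.symm hxnx))
        have hgz : gσ z = z := hgfix_iff z (hAfix z hz1 hz2 hzx)
        have hcommg := hgconjA z hz1 hz2 hgz
        have haEzx : aE M o ι z x = aE M o ι x z := by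
          have hc := hab _ (aE_mem M h0 hz2) _ (aE_mem M h0 hx2)
          have hc2 := congrArg (fun σ : Equiv.Perm X => σ o) hc
          simp only [Equiv.Perm.mul_apply] at hc2
          rwa [aE_o M h0 hx2, aE_o M h0 hz2] at hc2
        have ht'rel : M.r (aE M o ι z t) (aE M o ι z x) :=
          (presG M (mem_G M (aE_mem M h0 hz2)) t x).mp htx
        have ht'1 : ¬ M.r (aE M o ι z t) o := by
          intro hq
          have h5 : M.r (aE M o ι z x) o := M.requiv.trans (M.requiv.symm ht'rel) hq
          rw [haEzx] at h5
          have h6 := (presG M (inv_mem (mem_G M (aE_mem M h0 hx2))) _ _).mp h5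
          rw [Equiv.Perm.inv_apply_self] at h6
          exact hznx h6
        have ht'2 : ¬ M.r (aE M o ι z t) ι := by
          intro hq
          have h6 := (presG M (inv_mem (mem_G M (aE_mem M h0 hz2))) _ _).mp hq
          rw [Equiv.Perm.inv_apply_self] at h6
          have h7 : (aE M o ι z)⁻¹ ι = ι := by
            have := Equiv.Perm.inv_apply_self (aE M o ι z) ι
            rwa [aE_ι M h0 hz2] at this
          rw [h7] at h6
          exact ht2 h6
        have ht'x : ¬ M.r (aE M o ι z t) x := by
          intro hq
          have h5 : M.r (aE M o ι z x) x := M.requiv.trans (M.requiv.symm ht'rel) hq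
          rw [haEzx] at h5
          have h6 := (presG M (inv_mem (mem_G M (aE_mem M h0 hx2))) _ _).mp h5
          rw [Equiv.Perm.inv_apply_self] at h6
          have h7 : (aE M o ι x)⁻¹ x = o := by
            have := Equiv.Perm.inv_apply_self (aE M o ι x) o
            rwa [aE_o M h0 hx2] at this
          rw [h7] at h6
          exact hz1 h6
        have ht'fix : gσ (aE M o ι z t) = aE M o ι z t :=
          hgfix_iff _ (hAfix _ ht'1 ht'2 ht'x)
        have h8 : (gσ * aE M o ι z) t = (aE M o ι z * gσ) t := by rw [hcommg]
        simp only [Equiv.Perm.mul_apply] at h8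
        rw [ht'fix] at h8
        exact ((Equiv.injective (aE M o ι z)) h8).symm
      · exact hgfix_iff t (hA'fix t ht1 ht2 htnx)
    · exact hgfix_iff t (hAfix t ht1 ht2 htx)
  -- all points are fixed by gσ
  have hfixall : ∀ p : X, gσ p = p := by
    intro p
    by_cases hpo : M.r p o
    · have hge : gσ e = e := hunits e he.1 he.2
      have hcomm := hgconjA e he.1 he.2 hge
      have hwrel : M.r (aE M o ι e p) e := by
        have := (presG M (mem_G M (aE_mem M h0 he.2)) p o).mp hpo
        rwa [aE_o M h0 he.2] at this
      have hw1 : ¬ M.r (aE M o ι e p) o := fun hq =>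
        he.1 (M.requiv.trans (M.requiv.symm hwrel) hq)
      have hw2 : ¬ M.r (aE M o ι e p) ι := fun hq =>
        he.2 (M.requiv.trans (M.requiv.symm hwrel) hq)
      have hwfix : gσ (aE M o ι e p) = aE M o ι e p := hunits _ hw1 hw2
      have h8 : (gσ * aE M o ι e) p = (aE M o ι e * gσ) p := by rw [hcomm]
      simp only [Equiv.Perm.mul_apply] at h8
      rw [hwfix] at h8
      exact ((Equiv.injective (aE M o ι e)) h8).symm
    · by_cases hpι : M.r p ι
      · have hge : gσ e = e := hunits e he.1 he.2
        have hmemB : gσ * bE M o ι e * gσ⁻¹ ∈ M.U o := by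
          have := conj_mem M hgG o (bE_mem M h0 he.1)
          rwa [hgo] at this
        have hvalB : (gσ * bE M o ι e * gσ⁻¹) ι = e := by
          simp only [Equiv.Perm.mul_apply]
          rw [hginvι, bE_ι M h0 he.1, hge]
        have hconjB : gσ * bE M o ι e * gσ⁻¹ = bE M o ι e := bE_eq M h0 he.1 hmemB hvalB
        have hcommB : gσ * bE M o ι e = bE M o ι e * gσ := by
          calc gσ * bE M o ι e = (gσ * bE M o ι e * gσ⁻¹) * gσ := by group
            _ = bE M o ι e * gσ := by rw [hconjB]
        have hwrel : M.r (bE M o ι e p) e := by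
          have := (presG M (mem_G M (bE_mem M h0 he.1)) p ι).mp hpι
          rwa [bE_ι M h0 he.1] at this
        have hw1 : ¬ M.r (bE M o ι e p) o := fun hq =>
          he.1 (M.requiv.trans (M.requiv.symm hwrel) hq)
        have hw2 : ¬ M.r (bE M o ι e p) ι := fun hq =>
          he.2 (M.requiv.trans (M.requiv.symm hwrel) hq)
        have hwfix : gσ (bE M o ι e p) = bE M o ι e p := hunits _ hw1 hw2
        have h8 : (gσ * bE M o ι e) p = (bE M o ι e * gσ) p := by rw [hcommB]
        simp only [Equiv.Perm.mul_apply] at h8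
        rw [hwfix] at h8
        exact ((Equiv.injective (bE M o ι e)) h8).symm
      · exact hunits p hpo hpι
  have hmeq : m = mn := Equiv.ext fun p => hgfix_iff' p (hfixall p)
  have hμeq : μx = μnx := by rw [hm, hmn0, hmeq]
  have hmninv : mn = m⁻¹ := by
    rw [hmdef, hmndef, mul_inv_rev, mul_inv_rev,
      bE_neginv M h0 hτG hτo hτι hspτ hx1 hx2, ← aE_neg M h0 hx2, mul_assoc]
  refine ⟨by rw [hμeq], hμeq, ?_⟩
  have hsq : μx * μx = m * mn := by
    nth_rewrite 2 [hμeq]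
    rw [hm, hmn0]
  rw [hsq, hmninv]
  simp
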